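/- arXiv:1601.03705 — 5 statements merged into one kernel-verified Lean document; each statement's English description precedes it below -/
import Mathlib

section
/- There exist C > 0 and κ ∈ (0,1) such that for every L ≥ 1, every sequence a₁, …, a_L ∈ 𝒜, and every k₀ ∈ [1/(A+1), 1], the Euclidean distance in ℂ between (g_{a₁} ⋯ g_{a_L})·i and (g_{a₁} ⋯ g_{a_L})·k₀ is at most C·κ^L (here i is the imaginary unit in the upper half-plane and the action is by Möbius transformations). -/
noncomputable section

open Matrix

/-- The matrix `[[0,1],[1,a]]` with real entries. -/
def gmatR (a : ℕ) : Matrix (Fin 2) (Fin 2) ℝ := !![0, 1; 1, (a : ℝ)]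

/-- Möbius action of a real 2×2 matrix on ℂ. -/
def mobC (m : Matrix (Fin 2) (Fin 2) ℝ) (z : ℂ) : ℂ :=
  ((m 0 0 : ℂ) * z + (m 0 1 : ℂ)) / ((m 1 0 : ℂ) * z + (m 1 1 : ℂ))

/-- `A = max 𝒜`. -/
def maxA (𝒜 : Finset ℕ) : ℕ := 𝒜.sup id

lemma fib_sq (n : ℕ) : 2 ^ n ≤ 2 * (Nat.fib (n + 1)) ^ 2 := by
  induction n using Nat.strong_induction_on with
  | _ n ih =>
    match n with
    | 0 => simp
    | 1 => simp [Nat.fib]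
    | (n + 2) =>
      have h := ih n (by omega)
      have h2 : 2 * Nat.fib (n + 1) ≤ Nat.fib (n + 3) := by
        have e1 : Nat.fib (n + 3) = Nat.fib (n + 1) + Nat.fib (n + 2) :=
          Nat.fib_add_two
        have e2 : Nat.fib (n + 1) ≤ Nat.fib (n + 2) := Nat.fib_le_fib_succ
        omega
      have h3 : (2 * Nat.fib (n + 1)) ^ 2 ≤ Nat.fib (n + 3) ^ 2 :=
        Nat.pow_le_pow_left h2 2
      calc 2 ^ (n + 2) = 4 * 2 ^ n := by ring
        _ ≤ 4 * (2 * Nat.fib (n + 1) ^ 2) := by omega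
        _ = 2 * (2 * Nat.fib (n + 1)) ^ 2 := by ring
        _ ≤ 2 * Nat.fib (n + 2 + 1) ^ 2 := Nat.mul_le_mul_left 2 h3

lemma det_prod (l : List ℕ) : ((l.map gmatR).prod).det = (-1 : ℝ) ^ l.length := by
  induction l with
  | nil => simp
  | cons a t ih =>
    rw [List.map_cons, List.prod_cons, Matrix.det_mul, ih]
    have hg : (gmatR a).det = -1 := by simp [gmatR, Matrix.det_fin_two_of]
    rw [hg, List.length_cons, pow_succ]
    ring

lemma entries_bound (l : List ℕ) (hl : ∀ a ∈ l, 1 ≤ a) :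
    0 ≤ (l.map gmatR).prod 0 0 ∧ 0 ≤ (l.map gmatR).prod 0 1 ∧
    (Nat.fib l.length : ℝ) ≤ (l.map gmatR).prod 1 0 ∧
    (Nat.fib (l.length + 1) : ℝ) ≤ (l.map gmatR).prod 1 1 := by
  induction l using List.reverseRecOn with
  | nil => simp [Matrix.one_apply]
  | append_singleton l a ih =>
    have hl' : ∀ b ∈ l, 1 ≤ b := fun b hb => hl b (by simp [hb])
    have ha : 1 ≤ a := hl a (by simp)
    obtain ⟨h00, h01, h10, h11⟩ := ih hl'
    have hprod : ((l ++ [a]).map gmatR).prod = (l.map gmatR).prod * gmatR a := by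
      simp [List.map_append]
    have hfib0 : (0:ℝ) ≤ (Nat.fib l.length : ℝ) := by positivity
    have hfib1 : (0:ℝ) ≤ (Nat.fib (l.length+1) : ℝ) := by positivity
    have hr : (0:ℝ) ≤ (l.map gmatR).prod 1 0 := le_trans hfib0 h10
    have hs : (0:ℝ) ≤ (l.map gmatR).prod 1 1 := le_trans hfib1 h11
    have ha' : (1:ℝ) ≤ (a:ℝ) := by exact_mod_cast ha
    have e00 : gmatR a 0 0 = 0 := by simp [gmatR]
    have e01 : gmatR a 0 1 = 1 := by simp [gmatR]
    have e10 : gmatR a 1 0 = 1 := by simp [gmatR]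
    have e11 : gmatR a 1 1 = (a : ℝ) := by simp [gmatR]
    rw [hprod]
    refine ⟨?_, ?_, ?_, ?_⟩
    · rw [Matrix.mul_apply, Fin.sum_univ_two, e00, e10]
      nlinarith
    · rw [Matrix.mul_apply, Fin.sum_univ_two, e01, e11]
      nlinarith
    · rw [Matrix.mul_apply, Fin.sum_univ_two, e00, e10]
      simp only [List.length_append, List.length_singleton]
      simpa using h11
    · rw [Matrix.mul_apply, Fin.sum_univ_two, e01, e11]
      simp only [List.length_append, List.length_singleton]
      have hfa : Nat.fib (l.length + 1 + 1) = Nat.fib l.length + Nat.fib (l.length + 1) :=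
        Nat.fib_add_two
      rw [hfa]
      push_cast
      nlinarith

/-- Uniform contraction: there are `C > 0` and `κ < 1` such that for any nonempty word
`g_{a₁} ⋯ g_{a_L}` in the generators and any `k₀ ∈ [1/(A+1), 1]`,
`d_E(g_{a₁}⋯g_{a_L}·i, g_{a₁}⋯g_{a_L}·k₀) ≤ C·κ^L`. -/
theorem cf_orbit_contraction
    (𝒜 : Finset ℕ) (h2 : 2 ≤ 𝒜.card) (hpos : ∀ a ∈ 𝒜, 0 < a) :
    ∃ C κ : ℝ, 0 < C ∧ 0 < κ ∧ κ < 1 ∧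
      ∀ l : List ℕ, l ≠ [] → (∀ a ∈ l, a ∈ 𝒜) →
        ∀ k₀ : ℝ, k₀ ∈ Set.Icc (1 / ((maxA 𝒜 : ℝ) + 1)) 1 →
          dist (mobC (l.map gmatR).prod Complex.I) (mobC (l.map gmatR).prod (k₀ : ℂ)) ≤
            C * κ ^ l.length := by
  refine ⟨4, 1/2, by norm_num, by norm_num, by norm_num, ?_⟩
  intro l hne hmem k₀ hk₀
  set M := (l.map gmatR).prod with hM
  have hl1 : ∀ a ∈ l, 1 ≤ a := fun a ha => hpos a (hmem a ha)
  obtain ⟨hp, hq, hr, hs⟩ := entries_bound l hl1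
  set p := M 0 0; set q := M 0 1; set r := M 1 0; set s := M 1 1
  have hr0 : (0:ℝ) ≤ r := le_trans (by positivity) hr
  have hLpos : 0 < l.length := List.length_pos_iff.mpr hne
  have hfibpos : 1 ≤ Nat.fib (l.length + 1) := Nat.fib_pos.mpr (by omega)
  have hs1 : (1:ℝ) ≤ s := le_trans (by exact_mod_cast hfibpos) hs
  have hs0 : (0:ℝ) < s := by linarith
  have hk0 : 0 ≤ k₀ := by
    have h1 := hk₀.1
    have hA : (0:ℝ) < (maxA 𝒜 : ℝ) + 1 := by positivity
    have := one_div_pos.mpr hA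
    linarith
  have hk1 : k₀ ≤ 1 := hk₀.2
  -- determinant
  have hdet : |p * s - q * r| = 1 := by
    have hdM : M.det = (-1 : ℝ) ^ l.length := det_prod l
    have hd : M.det = p * s - q * r := by
      rw [Matrix.det_fin_two]
    rw [← hd, hdM, abs_pow, abs_neg, abs_one, one_pow]
  -- denominators
  have hD1re : ((r:ℂ) * Complex.I + (s:ℂ)).re = s := by simp
  have hD1ne : ((r:ℂ) * Complex.I + (s:ℂ)) ≠ 0 := fun h =>
    hs0.ne' (by rw [← hD1re, h, Complex.zero_re])
  have hD2eq : ((r:ℂ) * (k₀:ℂ) + (s:ℂ)) = ((r * k₀ + s : ℝ) : ℂ) := by push_cast; ring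
  have hrk : (0:ℝ) < r * k₀ + s := by nlinarith
  have hD2ne : ((r:ℂ) * (k₀:ℂ) + (s:ℂ)) ≠ 0 := by
    rw [hD2eq]; exact_mod_cast hrk.ne'
  -- key identity
  have key : mobC M Complex.I - mobC M (k₀:ℂ) =
      ((p * s - q * r : ℝ) : ℂ) * (Complex.I - (k₀:ℂ)) /
        (((r:ℂ) * Complex.I + (s:ℂ)) * ((r:ℂ) * (k₀:ℂ) + (s:ℂ))) := by
    rw [mobC, mobC]
    change ((p:ℂ) * Complex.I + (q:ℂ)) / ((r:ℂ) * Complex.I + (s:ℂ)) -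
      ((p:ℂ) * (k₀:ℂ) + (q:ℂ)) / ((r:ℂ) * (k₀:ℂ) + (s:ℂ)) = _
    rw [div_sub_div _ _ hD1ne hD2ne]
    push_cast
    ring
  rw [dist_eq_norm, key]
  rw [norm_div, norm_mul, norm_mul]
  have hnum1 : ‖((p * s - q * r : ℝ) : ℂ)‖ = 1 := by
    rw [Complex.norm_real]; exact hdet
  have hnum2 : ‖Complex.I - (k₀:ℂ)‖ ≤ 2 := by
    calc ‖Complex.I - (k₀:ℂ)‖ ≤ ‖Complex.I‖ + ‖(k₀:ℂ)‖ := norm_sub_le _ _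
      _ = 1 + |k₀| := by rw [Complex.norm_I, Complex.norm_real, Real.norm_eq_abs]
      _ ≤ 2 := by rw [abs_of_nonneg hk0]; linarith
  have hnD1 : s ≤ ‖(r:ℂ) * Complex.I + (s:ℂ)‖ := by
    calc s = |((r:ℂ) * Complex.I + (s:ℂ)).re| := by rw [hD1re, abs_of_pos hs0]
      _ ≤ ‖(r:ℂ) * Complex.I + (s:ℂ)‖ := Complex.abs_re_le_norm _
      _ = ‖(r:ℂ) * Complex.I + (s:ℂ)‖ := rfl
  have hnD2 : s ≤ ‖(r:ℂ) * (k₀:ℂ) + (s:ℂ)‖ := by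
    rw [hD2eq, Complex.norm_real, Real.norm_eq_abs, abs_of_pos hrk]
    nlinarith
  have hfibR : (Nat.fib (l.length + 1) : ℝ) ≤ s := hs
  have hss : (2:ℝ) ^ l.length ≤ 2 * (s * s) := by
    have h1 := fib_sq l.length
    have h2 : ((2:ℕ) ^ l.length : ℝ) ≤ ((2 * Nat.fib (l.length + 1) ^ 2 : ℕ) : ℝ) := by
      exact_mod_cast h1
    push_cast at h2
    nlinarith [hfibR, show (0:ℝ) ≤ (Nat.fib (l.length + 1) : ℝ) by positivity]
  have hd1pos : (0:ℝ) < ‖(r:ℂ) * Complex.I + (s:ℂ)‖ := lt_of_lt_of_le hs0 hnD1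
  have hd2pos : (0:ℝ) < ‖(r:ℂ) * (k₀:ℂ) + (s:ℂ)‖ := lt_of_lt_of_le hs0 hnD2
  have step1 : ‖((p * s - q * r : ℝ) : ℂ)‖ * ‖Complex.I - (k₀:ℂ)‖ /
      (‖(r:ℂ) * Complex.I + (s:ℂ)‖ * ‖(r:ℂ) * (k₀:ℂ) + (s:ℂ)‖) ≤ 2 / (s * s) := by
    apply div_le_div₀ (by positivity)
    · rw [hnum1, one_mul]; exact hnum2
    · positivity
    · exact mul_le_mul hnD1 hnD2 (le_of_lt hs0) (le_of_lt hd1pos)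
  refine le_trans step1 ?_
  rw [div_le_iff₀ (by positivity)]
  have hpp : ((1:ℝ)/2) ^ l.length * 2 ^ l.length = 1 := by
    rw [← mul_pow]; norm_num
  have hpow : (0:ℝ) < ((1:ℝ)/2) ^ l.length := by positivity
  nlinarith [mul_le_mul_of_nonneg_left hss (le_of_lt hpow)]
end
end

section
/- For every A ≥ 1 there exists c > 0 with the following property. Let E be a complex (or real) inner product space, b a real number with |b| ≥ 1, Z ⊂ ℝ a closed interval of length at most c/|b|, H : Z → ℝ a C¹ function with H > 0 and |H'(u)| ≤ A|b|·H(u) for all u ∈ Z, and f : Z → E a C¹ function with ‖f(u)‖ ≤ H(u) and ‖f'(u)‖ ≤ A|b|·H(u) for all u ∈ Z. Then either ‖f(u)‖ ≤ (3/4)·H(u) for all u ∈ Z, or ‖f(u)‖ ≥ (1/4)·H(u) for all u ∈ Z. -/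
universe u

/-- The dichotomy lemma (vector-valued version of Naud's Lemma 5.11): on a short interval
`Z` of length `≤ c/|b|`, a `C¹` function `f` dominated by `H ∈ 𝒞_{A|b|}` with
`‖f'‖ ≤ A|b|H` satisfies either `‖f‖ ≤ (3/4)H` on all of `Z`, or `‖f‖ ≥ (1/4)H` on all
of `Z`.  (A complex inner product space is in particular a real one, with the same norm,
so taking `E` a real inner product space covers both cases.) -/
theorem short_interval_dichotomy (A : ℝ) (hA : 1 ≤ A) :
    ∃ c : ℝ, 0 < c ∧
      ∀ (E : Type u) [NormedAddCommGroup E] [InnerProductSpace ℝ E],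
        ∀ b : ℝ, 1 ≤ |b| →
          ∀ z₁ z₂ : ℝ, z₂ - z₁ ≤ c / |b| →
            ∀ H : ℝ → ℝ, ContDiffOn ℝ 1 H (Set.Icc z₁ z₂) →
              (∀ u ∈ Set.Icc z₁ z₂, 0 < H u) →
              (∀ u ∈ Set.Icc z₁ z₂, |derivWithin H (Set.Icc z₁ z₂) u| ≤ A * |b| * H u) →
              ∀ f : ℝ → E, ContDiffOn ℝ 1 f (Set.Icc z₁ z₂) →
                (∀ u ∈ Set.Icc z₁ z₂, ‖f u‖ ≤ H u) →
                (∀ u ∈ Set.Icc z₁ z₂, ‖derivWithin f (Set.Icc z₁ z₂) u‖ ≤ A * |b| * H u) →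
                (∀ u ∈ Set.Icc z₁ z₂, ‖f u‖ ≤ 3 / 4 * H u) ∨
                  (∀ u ∈ Set.Icc z₁ z₂, 1 / 4 * H u ≤ ‖f u‖) := by
  have hA0 : (0:ℝ) < A := lt_of_lt_of_le one_pos hA
  refine ⟨1 / (8 * A), by positivity, ?_⟩
  intro E _ _ b hb z₁ z₂ hlen H hH hHpos hH' f hf hfH hf'
  rcases le_or_gt z₁ z₂ with hz | hz
  swap
  · left
    intro u hu
    rw [Set.Icc_eq_empty (not_le.mpr hz)] at hu
    exact hu.elim
  set s := Set.Icc z₁ z₂ with hs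
  have hb0 : (0:ℝ) < |b| := lt_of_lt_of_le one_pos hb
  have hconv : Convex ℝ s := convex_Icc _ _
  obtain ⟨uM, huM, hmax⟩ :=
    (isCompact_Icc).exists_isMaxOn ⟨z₁, le_refl z₁, hz⟩ (hH.continuousOn)
  set M := H uM with hM
  have hMpos : 0 < M := hHpos uM huM
  have hle : ∀ u ∈ s, H u ≤ M := fun u hu => hmax hu
  have hdist : ∀ u ∈ s, ∀ v ∈ s, ‖u - v‖ ≤ 1 / (8 * A) / |b| := by
    intro u hu v hv
    rw [Real.norm_eq_abs]
    refine le_trans ?_ hlen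
    rw [abs_sub_le_iff]
    constructor <;> [linarith [hu.1, hu.2, hv.1, hv.2]; linarith [hu.1, hu.2, hv.1, hv.2]]
  have hkey : (A * |b| * M) * (1 / (8 * A) / |b|) = M / 8 := by
    field_simp
  have hKf : ∀ u ∈ s, ∀ v ∈ s, ‖f u - f v‖ ≤ M / 8 := by
    intro u hu v hv
    have h1 : ‖f u - f v‖ ≤ (A * |b| * M) * ‖u - v‖ :=
      hconv.norm_image_sub_le_of_norm_derivWithin_le (hf.differentiableOn one_ne_zero)
        (fun x hx => (hf' x hx).trans (mul_le_mul_of_nonneg_left (hle x hx) (by positivity))) hv hu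
    calc ‖f u - f v‖ ≤ (A * |b| * M) * ‖u - v‖ := h1
      _ ≤ (A * |b| * M) * (1 / (8 * A) / |b|) := by
          exact mul_le_mul_of_nonneg_left (hdist u hu v hv) (by positivity)
      _ = M / 8 := hkey
  have hKH : ∀ u ∈ s, ∀ v ∈ s, |H u - H v| ≤ M / 8 := by
    intro u hu v hv
    have h1 : ‖H u - H v‖ ≤ (A * |b| * M) * ‖u - v‖ :=
      hconv.norm_image_sub_le_of_norm_derivWithin_le (hH.differentiableOn one_ne_zero)
        (fun x hx => by
          rw [Real.norm_eq_abs]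
          exact (hH' x hx).trans (mul_le_mul_of_nonneg_left (hle x hx) (by positivity))) hv hu
    rw [Real.norm_eq_abs] at h1
    calc |H u - H v| ≤ (A * |b| * M) * ‖u - v‖ := h1
      _ ≤ (A * |b| * M) * (1 / (8 * A) / |b|) := by
          exact mul_le_mul_of_nonneg_left (hdist u hu v hv) (by positivity)
      _ = M / 8 := hkey
  have hHlow : ∀ u ∈ s, 7 / 8 * M ≤ H u := by
    intro u hu
    have := hKH uM huM u hu
    have := abs_le.mp this
    linarith [this.2]
  by_cases hcase : ∀ u ∈ s, ‖f u‖ ≤ 3 / 4 * H u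
  · exact Or.inl hcase
  · right
    push_neg at hcase
    obtain ⟨u₀, hu₀, hgt⟩ := hcase
    intro u hu
    have h1 : ‖f u₀‖ - ‖f u‖ ≤ ‖f u₀ - f u‖ := norm_sub_norm_le _ _
    have h2 := hKf u₀ hu₀ u hu
    have h3 := hHlow u₀ hu₀
    have h4 := hle u hu
    linarith
end

section
/- Let G be a finite group and ν : G → ℝ a nonnegative function such that ‖ν ∗ ψ‖₂ ≤ |G|^{-1/2} · ‖ν‖₁ · ‖ψ‖₂ for every ψ : G → ℂ with Σ_{g∈G} ψ(g) = 0. Then ‖ν̃ ∗ ν‖₂ ≤ 2 · ‖ν‖₁² / |G|^{1/2}, where ν̃(g) = ν(g⁻¹). -/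
universe u

noncomputable section

/-- Convolution of functions on a finite group: `(μ ∗ φ)(x) = Σ_y μ(y)·φ(y⁻¹x)`. -/
def conv {G : Type u} [Group G] [Fintype G] (μ φ : G → ℂ) : G → ℂ :=
  fun x => ∑ y, μ y * φ (y⁻¹ * x)

/-- The `ℓ²` (Euclidean) norm on functions on a finite group. -/
def l2norm {G : Type u} [Fintype G] (φ : G → ℂ) : ℝ :=
  Real.sqrt (∑ g, ‖φ g‖ ^ 2)

lemma l2norm_eq_norm {G : Type u} [Fintype G] (φ : EuclideanSpace ℂ G) :
    l2norm φ = ‖φ‖ := by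
  rw [EuclideanSpace.norm_eq]
  simp [l2norm]

/-- If a nonnegative `ν` satisfies `‖ν ∗ ψ‖₂ ≤ |G|^{-1/2}‖ν‖₁‖ψ‖₂` for all `ψ` of mean
zero, then `‖ν̃ ∗ ν‖₂ ≤ 2‖ν‖₁²/|G|^{1/2}`, where `ν̃(g) = ν(g⁻¹)`. -/
theorem flattening_of_selfconvolution
    (G : Type u) [Group G] [Fintype G] (ν : G → ℝ) (hν : ∀ g, 0 ≤ ν g)
    (hgap : ∀ ψ : G → ℂ, (∑ g, ψ g) = 0 →
      l2norm (conv (fun g => (ν g : ℂ)) ψ) ≤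
        (Real.sqrt (Fintype.card G))⁻¹ * (∑ g, ν g) * l2norm ψ) :
    l2norm (conv (fun g => (ν g⁻¹ : ℂ)) (fun g => (ν g : ℂ))) ≤
      2 * (∑ g, ν g) ^ 2 / Real.sqrt (Fintype.card G) := by
  classical
  have hn1 : (1:ℝ) ≤ (Fintype.card G : ℝ) := by exact_mod_cast Fintype.card_pos
  set n : ℝ := (Fintype.card G : ℝ) with hn
  have hnpos : (0:ℝ) < n := by linarith
  set r : ℝ := Real.sqrt n with hr
  have hsqpos : 0 < r := Real.sqrt_pos.2 hnpos
  have hnn : r * r = n := Real.mul_self_sqrt (le_of_lt hnpos)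
  set S : ℝ := ∑ g, ν g with hSdef
  have hS0 : 0 ≤ S := Finset.sum_nonneg fun g _ => hν g
  set c : ℂ := ((S / n : ℝ) : ℂ) with hc
  set ψ : EuclideanSpace ℂ G := WithLp.toLp 2 (fun g => (ν g : ℂ) - c) with hψ
  set τ : EuclideanSpace ℂ G := WithLp.toLp 2 (fun u => ∑ y, (ν y : ℂ) * ψ (y * u)) with hτ
  -- mean zero of ψ
  have hψ0 : (∑ g, ψ g) = 0 := by
    have h1 : (∑ g, ψ g) = ((S : ℝ) : ℂ) - (Fintype.card G : ℂ) * c := by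
      simp only [hψ]
      rw [Finset.sum_sub_distrib, Finset.sum_const, Finset.card_univ, nsmul_eq_mul]
      push_cast [hSdef]
      ring
    rw [h1, hc, hn]
    push_cast
    field_simp
    ring
  -- mean zero of τ
  have hτ0 : (∑ u, τ u) = 0 := by
    rw [hτ]
    rw [Finset.sum_comm]
    have : ∀ y : G, ∑ u, (ν y : ℂ) * ψ (y * u) = 0 := by
      intro y
      rw [← Finset.mul_sum]
      have : (∑ u, ψ (y * u)) = ∑ u, ψ u := Equiv.sum_comp (Equiv.mulLeft y) ψ
      rw [this, hψ0, mul_zero]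
    simp [this]
  -- ℓ² norm of ψ at most S
  have hψS : ‖ψ‖ ≤ S := by
    rw [← l2norm_eq_norm]
    have habs : ∀ g, ‖ψ g‖ ^ 2 = (ν g - S / n) ^ 2 := by
      intro g
      have : ψ g = ((ν g - S / n : ℝ) : ℂ) := by simp only [hψ, hc]; push_cast; ring
      rw [this, Complex.norm_real, Real.norm_eq_abs, sq_abs]
    have hsum : (∑ g, ‖ψ g‖ ^ 2) ≤ S ^ 2 := by
      have h1 : (∑ g, (ν g - S / n) ^ 2) = (∑ g, (ν g) ^ 2) - S ^ 2 / n := by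
        have : ∀ g, (ν g - S / n) ^ 2 = (ν g) ^ 2 - 2 * (S / n) * ν g + (S / n) ^ 2 := by
          intro g; ring
        rw [Finset.sum_congr rfl fun g _ => this g]
        rw [Finset.sum_add_distrib, Finset.sum_sub_distrib, ← Finset.mul_sum,
          Finset.sum_const, Finset.card_univ, nsmul_eq_mul, ← hSdef, ← hn]
        field_simp
        ring
      have h2 : (∑ g, (ν g) ^ 2) ≤ S ^ 2 := by
        have hb : ∀ g ∈ Finset.univ, (ν g) ^ 2 ≤ ν g * S := by
          intro g _
          have hg : ν g ≤ S := Finset.single_le_sum (fun g _ => hν g) (Finset.mem_univ g)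
          calc (ν g) ^ 2 = ν g * ν g := by ring
            _ ≤ ν g * S := mul_le_mul_of_nonneg_left hg (hν g)
        calc (∑ g, (ν g) ^ 2) ≤ ∑ g, ν g * S := Finset.sum_le_sum hb
          _ = S * S := by rw [← Finset.sum_mul, ← hSdef]
          _ = S ^ 2 := by ring
      have h3 : 0 ≤ S ^ 2 / n := by positivity
      calc (∑ g, ‖ψ g‖ ^ 2) = ∑ g, (ν g - S / n) ^ 2 :=
            Finset.sum_congr rfl fun g _ => habs g
        _ = (∑ g, (ν g) ^ 2) - S ^ 2 / n := h1
        _ ≤ S ^ 2 := by linarith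
    calc l2norm ψ = Real.sqrt (∑ g, ‖ψ g‖ ^ 2) := rfl
      _ ≤ Real.sqrt (S ^ 2) := Real.sqrt_le_sqrt hsum
      _ = S := by rw [Real.sqrt_sq hS0]
  -- conv of the reflected ν equals the "adjoint" form
  have hconv_refl : ∀ ρ : G → ℂ,
      conv (fun g => (ν g⁻¹ : ℂ)) ρ = fun x => ∑ y, (ν y : ℂ) * ρ (y * x) := by
    intro ρ
    funext x
    show (∑ y, (ν y⁻¹ : ℂ) * ρ (y⁻¹ * x)) = _
    exact Equiv.sum_comp (Equiv.inv G) (fun y => (ν y : ℂ) * ρ (y * x))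
  -- bound on τ via Cauchy-Schwarz and the gap hypothesis
  have hτnorm : ‖τ‖ ≤ r⁻¹ * S * ‖ψ‖ := by
    set A : EuclideanSpace ℂ G := WithLp.toLp 2 (conv (fun g => (ν g : ℂ)) τ) with hA
    have hAτ : ‖A‖ ≤ r⁻¹ * S * ‖τ‖ := by
      rw [← l2norm_eq_norm, ← l2norm_eq_norm]
      exact hgap τ hτ0
    have hid : (inner ℂ τ τ : ℂ) = (inner ℂ A ψ : ℂ) := by
      rw [PiLp.inner_apply, PiLp.inner_apply]
      simp only [RCLike.inner_apply]
      rw [Finset.sum_congr rfl fun u _ => mul_comm (τ u) _,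
        Finset.sum_congr rfl fun w _ => mul_comm (ψ w) _]
      calc ∑ u, (starRingEnd ℂ) (τ u) * τ u
          = ∑ u, ∑ y, (starRingEnd ℂ) (τ u) * ((ν y : ℂ) * ψ (y * u)) := by
            refine Finset.sum_congr rfl fun u _ => ?_
            calc (starRingEnd ℂ) (τ u) * τ u
                = (starRingEnd ℂ) (τ u) * ∑ y, (ν y : ℂ) * ψ (y * u) := rfl
              _ = _ := Finset.mul_sum _ _ _
        _ = ∑ y, ∑ u, (starRingEnd ℂ) (τ u) * ((ν y : ℂ) * ψ (y * u)) := Finset.sum_comm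
        _ = ∑ y, ∑ w, (starRingEnd ℂ) (τ (y⁻¹ * w)) * ((ν y : ℂ) * ψ w) := by
            refine Finset.sum_congr rfl fun y _ => ?_
            rw [← Equiv.sum_comp (Equiv.mulLeft y⁻¹)
              (fun u => (starRingEnd ℂ) (τ u) * ((ν y : ℂ) * ψ (y * u)))]
            refine Finset.sum_congr rfl fun w _ => ?_
            simp only [Equiv.coe_mulLeft]
            rw [show y * (y⁻¹ * w) = w by group]
        _ = ∑ w, ∑ y, (starRingEnd ℂ) (τ (y⁻¹ * w)) * ((ν y : ℂ) * ψ w) := Finset.sum_comm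
        _ = ∑ w, (starRingEnd ℂ) (A w) * ψ w := by
            refine Finset.sum_congr rfl fun w _ => ?_
            have hAw : A w = ∑ y, (ν y : ℂ) * τ (y⁻¹ * w) := rfl
            rw [hAw, map_sum]
            rw [Finset.sum_mul]
            refine Finset.sum_congr rfl fun y _ => ?_
            rw [map_mul, Complex.conj_ofReal]
            ring
    have h1 : ‖τ‖ ^ 2 ≤ ‖A‖ * ‖ψ‖ := by
      calc ‖τ‖ ^ 2 = ‖(inner ℂ τ τ : ℂ)‖ := by
            rw [inner_self_eq_norm_sq_to_K]
            simp [norm_pow]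
        _ = ‖(inner ℂ A ψ : ℂ)‖ := by rw [hid]
        _ ≤ ‖A‖ * ‖ψ‖ := norm_inner_le_norm A ψ
    have h2 : ‖τ‖ ^ 2 ≤ (r⁻¹ * S * ‖τ‖) * ‖ψ‖ :=
      le_trans h1 (mul_le_mul_of_nonneg_right hAτ (norm_nonneg ψ))
    rcases eq_or_lt_of_le (norm_nonneg τ) with h | h
    · rw [← h]
      positivity
    · refine le_of_mul_le_mul_right ?_ h
      nlinarith [h2]
  -- decomposition
  set K : EuclideanSpace ℂ G := WithLp.toLp 2 (fun _ => (S : ℂ) * c) with hK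
  have hdecomp : conv (fun g => (ν g⁻¹ : ℂ)) (fun g => (ν g : ℂ)) = (K + τ).ofLp := by
    rw [hconv_refl]
    funext x
    show (∑ y, (ν y : ℂ) * (ν (y * x) : ℂ)) = (S : ℂ) * c + τ x
    rw [hτ]
    have hb : ∀ y : G, (ν y : ℂ) * (ν (y * x) : ℂ) = (ν y : ℂ) * c + (ν y : ℂ) * ψ (y * x) := by
      intro y
      simp only [hψ]
      ring
    rw [Finset.sum_congr rfl fun y _ => hb y, Finset.sum_add_distrib, ← Finset.sum_mul]
    push_cast [hSdef]
    ring
  -- norm of the constant function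
  have hconst : ‖K‖ = r * (S * (S / n)) := by
    rw [← l2norm_eq_norm]
    have habs : ‖(S : ℂ) * c‖ = S * (S / n) := by
      rw [hc, ← Complex.ofReal_mul, Complex.norm_real, Real.norm_eq_abs, abs_of_nonneg (by positivity)]
    show Real.sqrt (∑ _g : G, ‖(S : ℂ) * c‖ ^ 2) = _
    rw [Finset.sum_const, Finset.card_univ, nsmul_eq_mul, habs, ← hn]
    rw [Real.sqrt_mul (le_of_lt hnpos), Real.sqrt_sq (by positivity), ← hr]
  -- put it together
  have key : l2norm (conv (fun g => (ν g⁻¹ : ℂ)) (fun g => (ν g : ℂ)))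
      ≤ r * (S * (S / n)) + r⁻¹ * S * S := by
    rw [hdecomp, l2norm_eq_norm]
    calc ‖K + τ‖ ≤ ‖K‖ + ‖τ‖ := norm_add_le _ _
      _ ≤ r * (S * (S / n)) + r⁻¹ * S * S := by
          have h2 : ‖τ‖ ≤ r⁻¹ * S * S :=
            le_trans hτnorm (by
              apply mul_le_mul_of_nonneg_left hψS
              positivity)
          linarith [hconst.le, hconst.ge]
  have hfinal : r * (S * (S / n)) + r⁻¹ * S * S = 2 * S ^ 2 / r := by
    rw [← hnn]
    field_simp
    ring
  rw [← hfinal]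
  exact key
end
end

section
/- Let G be a finite group and let η = Σ_{i ∈ I} β_i·δ_{g_i} be a nonnegative measure on G supported on finitely many elements g_i ∈ G indexed by a finite set I, with all β_i > 0 and β_i ≤ c'·β_j for all i, j ∈ I. Suppose ε > 0 is such that for every φ : G → ℂ with Σ_g φ(g) = 0 and ‖φ‖₂ = 1, there exist i, j ∈ I with ‖δ_{g_i g_j^{-1}} ∗ φ − φ‖₂ > ε. Then there is C₁ > 0, depending only on c', ε and |I|, such that ‖η ∗ φ‖₂ ≤ (1 − C₁)·‖η‖₁·‖φ‖₂ for every φ : G → ℂ with Σ_g φ(g) = 0. -/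
universe u v

noncomputable section

set_option linter.unusedSectionVars false
set_option linter.unusedTactic false
set_option maxHeartbeats 1000000

namespace CAux
variable {G : Type u} [Group G] [Fintype G]

def toV (φ : G → ℂ) : EuclideanSpace ℂ G := WithLp.toLp 2 φ

lemma l2norm_eq (φ : G → ℂ) : l2norm φ = ‖toV φ‖ := by
  rw [EuclideanSpace.norm_eq]
  simp [l2norm, toV]

def T (a : G) (φ : G → ℂ) : G → ℂ := fun x => φ (a⁻¹ * x)

lemma norm_T (a : G) (φ : G → ℂ) : ‖toV (T a φ)‖ = ‖toV φ‖ := by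
  rw [EuclideanSpace.norm_eq, EuclideanSpace.norm_eq]
  congr 1
  exact Equiv.sum_comp (Equiv.mulLeft a⁻¹) (fun x => ‖φ x‖ ^ 2)

lemma norm_sub_T (a : G) (φ ψ : G → ℂ) :
    ‖toV (T a φ) - toV (T a ψ)‖ = ‖toV φ - toV ψ‖ := by
  have h1 : toV (T a φ) - toV (T a ψ) = toV (T a (fun x => φ x - ψ x)) := rfl
  have h2 : toV φ - toV ψ = toV (fun x => φ x - ψ x) := rfl
  rw [h1, h2, norm_T]

lemma T_mul (a b : G) (φ : G → ℂ) : T a (T b φ) = T (a * b) φ := by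
  funext x; simp [T, mul_assoc]

lemma sum_T (a : G) (φ : G → ℂ) : ∑ x, T a φ x = ∑ x, φ x :=
  Equiv.sum_comp (Equiv.mulLeft a⁻¹) φ

lemma l2norm_smul (c : ℂ) (φ : G → ℂ) :
    l2norm (fun x => c * φ x) = ‖c‖ * l2norm φ := by
  have h : toV (fun x => c * φ x) = c • toV φ := rfl
  rw [l2norm_eq, l2norm_eq, h, norm_smul]

lemma l2norm_zero_iff (φ : G → ℂ) : l2norm φ = 0 ↔ φ = 0 := by
  rw [l2norm_eq, norm_eq_zero]
  constructor
  · intro h; funext x; exact congrArg (fun w : EuclideanSpace ℂ G => WithLp.ofLp w x) h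
  · intro h; rw [h]; rfl

lemma key (c' ε : ℝ) (hε : 0 < ε)
    {ι : Type v} [Fintype ι] [Nonempty ι]
    (g : ι → G) (β : ι → ℝ) (hβpos : ∀ i, 0 < β i) (hβc : ∀ i j, β i ≤ c' * β j)
    (hno : ∀ φ : G → ℂ, (∑ x, φ x) = 0 → l2norm φ = 1 →
      ∃ i j, ε < l2norm (fun x => φ ((g i * (g j)⁻¹)⁻¹ * x) - φ x))
    (φ : G → ℂ) (hsum : (∑ x, φ x) = 0) (hunit : l2norm φ = 1) :
    (l2norm (fun x => ∑ i, (β i : ℂ) * φ ((g i)⁻¹ * x)))^2 ≤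
      (1 - ε^2 / (8 * ((Fintype.card ι : ℝ) * c')^2)) * (∑ i, β i)^2 := by
  classical
  obtain ⟨k⟩ := (inferInstance : Nonempty ι)
  -- apply hypothesis to translated φ
  have hsumψ : (∑ x, T (g k) φ x) = 0 := by rw [sum_T]; exact hsum
  have hunitψ : l2norm (T (g k) φ) = 1 := by
    rw [l2norm_eq, norm_T, ← l2norm_eq]; exact hunit
  obtain ⟨i, j, hij⟩ := hno (T (g k) φ) hsumψ hunitψ
  set u : ι → EuclideanSpace ℂ G := fun l => toV (T (g l) φ) with hu
  -- rewrite the almost-invariance norm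
  have hfun : (fun x => T (g k) φ ((g i * (g j)⁻¹)⁻¹ * x) - T (g k) φ x)
      = fun x => T (g i * (g j)⁻¹ * g k) φ x - T (g k) φ x := by
    funext x; simp [T, mul_assoc]
  rw [hfun] at hij
  have hij' : ε < ‖toV (T (g i * (g j)⁻¹ * g k) φ) - u k‖ := by
    have : (fun x => T (g i * (g j)⁻¹ * g k) φ x - T (g k) φ x)
        = (T (g i * (g j)⁻¹ * g k) φ) - (T (g k) φ) := rfl
    rw [this, l2norm_eq] at hij
    exact hij
  -- triangle inequality
  have t1 : ‖toV (T (g i * (g j)⁻¹ * g k) φ) - u i‖ = ‖u k - u j‖ := by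
    have e1 : T (g i * (g j)⁻¹ * g k) φ = T (g i) (T ((g j)⁻¹ * g k) φ) := by
      rw [T_mul]; congr 1; group
    have e2 : T (g k) φ = T (g j) (T ((g j)⁻¹ * g k) φ) := by
      rw [T_mul]; congr 1; group
    have A : ‖toV (T (g i * (g j)⁻¹ * g k) φ) - toV (T (g i) φ)‖
        = ‖toV (T ((g j)⁻¹ * g k) φ) - toV φ‖ := by
      rw [e1]; exact norm_sub_T (g i) _ φ
    have B : ‖toV (T (g k) φ) - toV (T (g j) φ)‖
        = ‖toV (T ((g j)⁻¹ * g k) φ) - toV φ‖ := by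
      rw [e2]; exact norm_sub_T (g j) _ φ
    rw [hu]
    simp only
    rw [A, ← B]
  have htri : ε < ‖u k - u j‖ + ‖u i - u k‖ := by
    calc ε < ‖toV (T (g i * (g j)⁻¹ * g k) φ) - u k‖ := hij'
    _ ≤ ‖toV (T (g i * (g j)⁻¹ * g k) φ) - u i‖ + ‖u i - u k‖ :=
        norm_sub_le_norm_sub_add_norm_sub _ _ _
    _ = ‖u k - u j‖ + ‖u i - u k‖ := by rw [t1]
  -- get a pair with big gap
  have hpair : ∃ a b, ε / 2 < ‖u a - u b‖ := by
    by_cases h : ε / 2 < ‖u k - u j‖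
    · exact ⟨k, j, h⟩
    · exact ⟨i, k, by push_neg at h; linarith⟩
  obtain ⟨a, b, hab⟩ := hpair
  have hnorm : ∀ l, ‖u l‖ = 1 := by
    intro l; rw [hu]; simp only; rw [norm_T, ← l2norm_eq]; exact hunit
  set r : ι → ι → ℝ := fun p q => RCLike.re (K := ℂ) (inner ℂ (u p) (u q)) with hr
  have hr_le : ∀ p q, r p q ≤ 1 := by
    intro p q
    have h := re_inner_le_norm (𝕜 := ℂ) (u p) (u q)
    rw [hnorm, hnorm] at h
    simp only [hr]
    linarith [h]
  have hr_ab : r a b ≤ 1 - ε^2 / 8 := by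
    have hns := @norm_sub_sq ℂ _ _ _ _ (u a) (u b)
    rw [hnorm, hnorm] at hns
    have h2 : (ε/2)^2 < ‖u a - u b‖^2 := by
      have h0 := norm_nonneg (u a - u b)
      nlinarith
    simp only [hr]
    nlinarith
  -- expansion of the norm
  set v : EuclideanSpace ℂ G := toV (fun x => ∑ i, (β i : ℂ) * φ ((g i)⁻¹ * x)) with hv
  have hvsum : v = ∑ l, (β l : ℂ) • u l := by
    have e0 : (fun x => ∑ i, (β i : ℂ) * φ ((g i)⁻¹ * x))
        = ∑ l, (fun x => (β l : ℂ) * T (g l) φ x) := by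
      funext x
      rw [Finset.sum_apply]
      rfl
    rw [hv, e0]
    have : ∀ (s : Finset ι) (f : ι → (G → ℂ)),
        toV (∑ l ∈ s, f l) = ∑ l ∈ s, toV (f l) := by
      intro s f
      induction s using Finset.induction_on with
      | empty => rfl
      | insert _ _ hx ih =>
        rw [Finset.sum_insert hx, Finset.sum_insert hx, ← ih]
        rfl
    rw [this]
    rfl
  have hnormv : ‖v‖^2 = ∑ p, ∑ q, β p * β q * r p q := by
    rw [norm_sq_eq_re_inner (𝕜 := ℂ) v]
    have hin : (inner ℂ v v : ℂ)
        = ∑ p, ∑ q, ((β p : ℂ) * ((β q : ℂ) * inner ℂ (u p) (u q))) := by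
      rw [hvsum, sum_inner]
      refine Finset.sum_congr rfl fun p _ => ?_
      rw [inner_smul_left, Complex.conj_ofReal, inner_sum, Finset.mul_sum]
      refine Finset.sum_congr rfl fun q _ => ?_
      rw [inner_smul_right]
    rw [hin, map_sum]
    refine Finset.sum_congr rfl fun p _ => ?_
    rw [map_sum]
    refine Finset.sum_congr rfl fun q _ => ?_
    simp only [hr]
    have : ∀ (t : ℝ) (z : ℂ), RCLike.re ((t:ℂ) * z) = t * RCLike.re z := by
      intro t z
      simp [Complex.re_ofReal_mul]
    rw [this, this]
    ring
  -- bounding the double sum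
  have hterm : ∀ p q, 0 ≤ β p * β q - β p * β q * r p q := by
    intro p q
    have h1 := hr_le p q
    nlinarith [mul_pos (hβpos p) (hβpos q)]
  have hsum_le : ∑ p, ∑ q, β p * β q * r p q
      ≤ (∑ i, β i)^2 - β a * β b * (ε^2/8) := by
    have expand : (∑ i, β i)^2 = ∑ p, ∑ q, β p * β q := by
      rw [sq, Finset.sum_mul_sum]
    have key2 : β a * β b * (ε^2/8)
        ≤ ∑ p, ∑ q, (β p * β q - β p * β q * r p q) := by
      calc β a * β b * (ε^2/8) ≤ β a * β b - β a * β b * r a b := by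
            nlinarith [mul_pos (hβpos a) (hβpos b)]
      _ ≤ ∑ q, (β a * β q - β a * β q * r a q) :=
            Finset.single_le_sum (fun q _ => hterm a q) (Finset.mem_univ b)
      _ ≤ ∑ p, ∑ q, (β p * β q - β p * β q * r p q) :=
            Finset.single_le_sum
              (fun p _ => Finset.sum_nonneg fun q _ => hterm p q) (Finset.mem_univ a)
    have hsplit : ∑ p, ∑ q, (β p * β q - β p * β q * r p q)
        = (∑ p, ∑ q, β p * β q) - ∑ p, ∑ q, β p * β q * r p q := by
      rw [← Finset.sum_sub_distrib]
      refine Finset.sum_congr rfl fun p _ => ?_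
      rw [← Finset.sum_sub_distrib]
    rw [hsplit] at key2
    linarith [expand]
  -- weight comparability
  have hc'1 : 1 ≤ c' := by have h := hβc k k; nlinarith [hβpos k]
  have hnpos : 0 < (Fintype.card ι : ℝ) := by
    exact_mod_cast Fintype.card_pos
  set Q : ℝ := (Fintype.card ι : ℝ) * c' with hQdef
  have hc'0 : 0 < c' := lt_of_lt_of_le one_pos hc'1
  have hQ : 0 < Q := mul_pos hnpos hc'0
  have hSpos : 0 < ∑ i, β i :=
    Finset.sum_pos (fun i _ => hβpos i) Finset.univ_nonempty
  have hcomp : ∀ l, (∑ i, β i) ≤ Q * β l := by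
    intro l
    calc ∑ i, β i ≤ ∑ _i : ι, c' * β l := Finset.sum_le_sum fun i _ => hβc i l
    _ = (Fintype.card ι : ℝ) * (c' * β l) := by
        rw [Finset.sum_const, nsmul_eq_mul, Finset.card_univ]
    _ = Q * β l := by rw [hQdef]; ring
  have hab2 : (∑ i, β i)^2 ≤ Q^2 * (β a * β b) := by
    nlinarith [hcomp a, hcomp b, hβpos a, hβpos b]
  have hfrac : ε^2/(8*Q^2) * (∑ i, β i)^2 ≤ β a * β b * (ε^2/8) := by
    rw [div_mul_eq_mul_div, div_le_iff₀ (by positivity)]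
    nlinarith [sq_nonneg ε]
  have hlhs : l2norm (fun x => ∑ i, (β i : ℂ) * φ ((g i)⁻¹ * x)) = ‖v‖ := by
    rw [hv, l2norm_eq]
  rw [hlhs, hnormv]
  have : (1 - ε^2 / (8*Q^2)) * (∑ i, β i)^2
      = (∑ i, β i)^2 - ε^2/(8*Q^2) * (∑ i, β i)^2 := by ring
  rw [hQdef] at this
  rw [this]
  linarith

end CAux

/-- If `η = Σᵢ βᵢ δ_{gᵢ}` is a nonnegative measure with comparable weights
(`βᵢ ≤ c'·βⱼ`) and no mean-zero unit vector is `ε`-almost-invariant under all the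
`δ_{gᵢgⱼ⁻¹}`, then convolution by `η` contracts mean-zero vectors:
`‖η ∗ φ‖₂ ≤ (1 - C₁)‖η‖₁‖φ‖₂`, with `C₁` depending only on `c'`, `ε` and `|I|`. -/
theorem contraction_from_no_almost_invariant_vectors
    (c' ε : ℝ) (n : ℕ) (hε : 0 < ε) :
    ∃ C₁ : ℝ, 0 < C₁ ∧
      ∀ (G : Type u) [Group G] [Fintype G] (ι : Type v) [Fintype ι],
        Fintype.card ι = n →
        ∀ (g : ι → G) (β : ι → ℝ),
          (∀ i, 0 < β i) → (∀ i j, β i ≤ c' * β j) →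
          (∀ φ : G → ℂ, (∑ x, φ x) = 0 → l2norm φ = 1 →
            ∃ i j, ε < l2norm (fun x => φ ((g i * (g j)⁻¹)⁻¹ * x) - φ x)) →
          ∀ φ : G → ℂ, (∑ x, φ x) = 0 →
            l2norm (fun x => ∑ i, (β i : ℂ) * φ ((g i)⁻¹ * x)) ≤
              (1 - C₁) * (∑ i, β i) * l2norm φ := by
  classical
  have hQ0pos : (0:ℝ) < (max (n:ℝ) 1) * (max c' 1) :=
    mul_pos (lt_of_lt_of_le one_pos (le_max_right _ _))
      (lt_of_lt_of_le one_pos (le_max_right _ _))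
  refine ⟨min (1/2) (ε^2 / (16 * ((max (n:ℝ) 1) * (max c' 1))^2)), ?_, ?_⟩
  · exact lt_min (by norm_num) (by positivity)
  intro G _ _ ι _ hcard g β hβpos hβc hno φ hφsum
  set C : ℝ := min (1/2) (ε^2 / (16 * ((max (n:ℝ) 1) * (max c' 1))^2)) with hCdef
  rcases isEmpty_or_nonempty ι with hemp | hne
  · simp only [Finset.univ_eq_empty, Finset.sum_empty]
    have h0 : l2norm (fun _ : G => (0:ℂ)) = 0 := by simp [l2norm]
    rw [h0]
    have : (1 - C) * 0 * l2norm φ = 0 := by ring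
    rw [this]
  · obtain ⟨k⟩ := hne
    haveI : Nonempty ι := ⟨k⟩
    have hc'1 : 1 ≤ c' := by have h := hβc k k; nlinarith [hβpos k]
    have hc'0 : 0 < c' := lt_of_lt_of_le one_pos hc'1
    have hn1 : 1 ≤ n := by rw [← hcard]; exact Fintype.card_pos
    have hmaxc : max c' 1 = c' := max_eq_left hc'1
    have hmaxn : max (n:ℝ) 1 = (n:ℝ) := max_eq_left (by exact_mod_cast hn1)
    have hn0 : (0:ℝ) < (n:ℝ) := by exact_mod_cast Nat.lt_of_lt_of_le Nat.zero_lt_one hn1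
    have hcardι : (Fintype.card ι : ℝ) = (n:ℝ) := by exact_mod_cast hcard
    have hSpos : 0 < ∑ i, β i := Finset.sum_pos (fun i _ => hβpos i) Finset.univ_nonempty
    have hC12 : C ≤ 1/2 := min_le_left _ _
    have hCpos : 0 < C := lt_min (by norm_num) (by positivity)
    by_cases hzero : l2norm φ = 0
    · have hφ0 : φ = 0 := (CAux.l2norm_zero_iff φ).1 hzero
      rw [hzero, mul_zero]
      have : (fun x => ∑ i, (β i : ℂ) * φ ((g i)⁻¹ * x)) = fun _ : G => (0:ℂ) := by
        funext x; rw [hφ0]; simp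
      rw [this]
      have h0 : l2norm (fun _ : G => (0:ℂ)) = 0 := by simp [l2norm]
      rw [h0]
    · have hL : 0 < l2norm φ :=
        lt_of_le_of_ne (Real.sqrt_nonneg _) (Ne.symm hzero)
      set ρ : ℝ := l2norm φ with hρ
      set ψ : G → ℂ := fun x => ((ρ:ℂ))⁻¹ * φ x with hψ
      have hψsum : (∑ x, ψ x) = 0 := by
        rw [hψ]
        simp only
        rw [← Finset.mul_sum, hφsum, mul_zero]
      have habs : ‖(((ρ:ℝ):ℂ))⁻¹‖ = ρ⁻¹ := by
        rw [norm_inv, Complex.norm_of_nonneg hL.le]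
      have hψnorm : l2norm ψ = 1 := by
        rw [hψ, CAux.l2norm_smul, habs, ← hρ, inv_mul_cancel₀ (ne_of_gt hL)]
      have hkey := CAux.key c' ε hε g β hβpos hβc hno ψ hψsum hψnorm
      have hconv : (fun x => ∑ i, (β i : ℂ) * ψ ((g i)⁻¹ * x))
          = fun x => ((ρ:ℝ):ℂ)⁻¹ * (∑ i, (β i : ℂ) * φ ((g i)⁻¹ * x)) := by
        funext x
        rw [Finset.mul_sum]
        refine Finset.sum_congr rfl fun i _ => ?_
        rw [hψ]; ring
      rw [hconv, CAux.l2norm_smul, habs] at hkey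
      set L : ℝ := l2norm (fun x => ∑ i, (β i : ℂ) * φ ((g i)⁻¹ * x)) with hLdef
      have hLnonneg : 0 ≤ L := Real.sqrt_nonneg _
      rw [hcardι] at hkey
      -- hkey : (ρ⁻¹ * L)^2 ≤ (1 - ε^2/(8*((n:ℝ)*c')^2)) * (∑ i, β i)^2
      have hKpos : (0:ℝ) < ((n:ℝ)*c')^2 := by positivity
      have h2C : 2*C ≤ ε^2/(8*((n:ℝ)*c')^2) := by
        have hCle : C ≤ ε^2/(16*((n:ℝ)*c')^2) := by
          rw [hCdef, hmaxn, hmaxc]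
          exact min_le_right _ _
        rw [le_div_iff₀ (by positivity)]
        have := (le_div_iff₀ (by positivity : (0:ℝ) < 16*((n:ℝ)*c')^2)).1 hCle
        nlinarith [this]
      have hsq : (ρ⁻¹ * L)^2 ≤ ((1-C) * (∑ i, β i))^2 := by
        have h1 : 1 - ε^2/(8*((n:ℝ)*c')^2) ≤ (1-C)^2 := by nlinarith [sq_nonneg C]
        calc (ρ⁻¹ * L)^2 ≤ (1 - ε^2/(8*((n:ℝ)*c')^2)) * (∑ i, β i)^2 := hkey
        _ ≤ (1-C)^2 * (∑ i, β i)^2 := by nlinarith [sq_nonneg (∑ i, β i)]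
        _ = ((1-C) * (∑ i, β i))^2 := by ring
      have hmain : ρ⁻¹ * L ≤ (1-C) * (∑ i, β i) := by
        have h1 : 0 ≤ ρ⁻¹ * L := mul_nonneg (inv_nonneg.2 hL.le) hLnonneg
        have h2 : 0 ≤ (1-C) * (∑ i, β i) := mul_nonneg (by linarith) hSpos.le
        nlinarith [hsq]
      calc L = ρ * (ρ⁻¹ * L) := by
            field_simp
      _ ≤ ρ * ((1-C) * (∑ i, β i)) := mul_le_mul_of_nonneg_left hmain hL.le
      _ = (1-C) * (∑ i, β i) * ρ := by ring
end
end

section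
/- Let 𝒜 be a finite set of positive integers and for a ∈ 𝒜 let g_a = [[0,1],[1,a]]. The semigroup generated by the g_a is free: if m, n ≥ 1 and a₁, …, a_m, b₁, …, b_n ∈ 𝒜 satisfy g_{a₁} g_{a₂} ⋯ g_{a_m} = g_{b₁} g_{b₂} ⋯ g_{b_n} as matrices, then m = n and a_i = b_i for all i. -/
def gmatZ (a : ℕ) : Matrix (Fin 2) (Fin 2) ℤ := !![0, 1; 1, (a : ℤ)]

lemma prod_cons (a : ℕ) (l : List ℕ) :
    ((a :: l).map gmatZ).prod = gmatZ a * (l.map gmatZ).prod := by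
  simp

lemma mul_e (a : ℕ) (Q : Matrix (Fin 2) (Fin 2) ℤ) :
    (gmatZ a * Q) 0 0 = Q 1 0 ∧ (gmatZ a * Q) 0 1 = Q 1 1 ∧
    (gmatZ a * Q) 1 0 = Q 0 0 + a * Q 1 0 ∧ (gmatZ a * Q) 1 1 = Q 0 1 + a * Q 1 1 := by
  refine ⟨?_, ?_, ?_, ?_⟩ <;> simp [gmatZ, Matrix.mul_apply, Fin.sum_univ_two]

lemma det_gmat_prod (l : List ℕ) : ((l.map gmatZ).prod).det = (-1)^l.length := by
  induction l with
  | nil => simp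
  | cons a t ih =>
    rw [prod_cons, Matrix.det_mul, ih]
    simp [gmatZ, Matrix.det_fin_two_of, pow_succ]

lemma gmat_entries : ∀ (l : List ℕ), (∀ a ∈ l, 1 ≤ a) → l ≠ [] →
    0 ≤ (l.map gmatZ).prod 0 0 ∧ 0 ≤ (l.map gmatZ).prod 0 1 ∧
    (l.map gmatZ).prod 0 0 ≤ (l.map gmatZ).prod 1 0 ∧
    (l.map gmatZ).prod 0 1 ≤ (l.map gmatZ).prod 1 1 ∧
    1 ≤ (l.map gmatZ).prod 1 0 ∧ 1 ≤ (l.map gmatZ).prod 1 1 := by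
  intro l
  induction l with
  | nil => intro _ h; exact absurd rfl h
  | cons a t ih =>
    intro hmem _
    have ha : (1:ℤ) ≤ (a:ℤ) := by exact_mod_cast hmem a List.mem_cons_self
    match t with
    | [] =>
      simp only [List.map_cons, List.map_nil, List.prod_cons, List.prod_nil, mul_one]
      refine ⟨?_, ?_, ?_, ?_, ?_, ?_⟩ <;> simp [gmatZ] <;> linarith
    | c :: s =>
      obtain ⟨q1, q2, q3, q4, q5, q6⟩ :=
        ih (fun x hx => hmem x (List.mem_cons_of_mem a hx)) (by simp)
      obtain ⟨e1, e2, e3, e4⟩ := mul_e a ((c::s).map gmatZ).prod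
      rw [prod_cons]
      rw [e1, e2, e3, e4]
      refine ⟨by linarith, by linarith, ?_, ?_, ?_, ?_⟩ <;>
        nlinarith [mul_nonneg (by linarith : (0:ℤ) ≤ (a:ℤ) - 1) (by linarith : (0:ℤ) ≤ ((c::s).map gmatZ).prod 1 0),
          mul_nonneg (by linarith : (0:ℤ) ≤ (a:ℤ) - 1) (by linarith : (0:ℤ) ≤ ((c::s).map gmatZ).prod 1 1)]

lemma gmat_unit (a : ℕ) : IsUnit (gmatZ a) := by
  apply (Matrix.isUnit_iff_isUnit_det _).mpr
  simp [gmatZ, Matrix.det_fin_two_of]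

lemma first_letter_eq (a b A B C D A' B' : ℤ)
    (h10 : A + a*C = A' + b*C) (h11 : B + a*D = B' + b*D)
    (hA : 0 ≤ A) (hB : 0 ≤ B) (hAC : A ≤ C) (hBD : B ≤ D)
    (hC1 : 1 ≤ C) (hD1 : 1 ≤ D)
    (hA' : 0 ≤ A') (hB' : 0 ≤ B') (hAC' : A' ≤ C) (hBD' : B' ≤ D)
    (hdetP : A*D - B*C ≠ 0) (hdetQ : A'*D - B'*C ≠ 0) : a = b := by
  rcases lt_trichotomy a b with hlt | heq | hgt
  · exfalso
    have t1 : 0 ≤ (b - a - 1) * C := mul_nonneg (by linarith) (by linarith)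
    have t2 : 0 ≤ (b - a - 1) * D := mul_nonneg (by linarith) (by linarith)
    have hAeq : A = C := by nlinarith
    have hBeq : B = D := by nlinarith
    exact hdetP (by rw [hAeq, hBeq]; ring)
  · exact heq
  · exfalso
    have t1 : 0 ≤ (a - b - 1) * C := mul_nonneg (by linarith) (by linarith)
    have t2 : 0 ≤ (a - b - 1) * D := mul_nonneg (by linarith) (by linarith)
    have hAeq : A' = C := by nlinarith
    have hBeq : B' = D := by nlinarith
    exact hdetQ (by rw [hAeq, hBeq]; ring)

lemma free_aux : ∀ (l₁ l₂ : List ℕ), l₁ ≠ [] → l₂ ≠ [] →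
    (∀ a ∈ l₁, 1 ≤ a) → (∀ a ∈ l₂, 1 ≤ a) →
    (l₁.map gmatZ).prod = (l₂.map gmatZ).prod → l₁ = l₂ := by
  intro l₁
  induction l₁ with
  | nil => intro l₂ h; exact absurd rfl h
  | cons a t₁ ih =>
    intro l₂ _ h₂ hm₁ hm₂ h
    cases l₂ with
    | nil => exact absurd rfl h₂
    | cons b t₂ =>
      have ha : (1:ℤ) ≤ (a:ℤ) := by exact_mod_cast hm₁ a (by simp)
      have hb : (1:ℤ) ≤ (b:ℤ) := by exact_mod_cast hm₂ b (by simp)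
      have hmt₁ : ∀ x ∈ t₁, 1 ≤ x := fun x hx => hm₁ x (by simp [hx])
      have hmt₂ : ∀ x ∈ t₂, 1 ≤ x := fun x hx => hm₂ x (by simp [hx])
      rw [prod_cons, prod_cons] at h
      cases t₁ with
      | nil =>
        cases t₂ with
        | nil =>
          have := congrFun (congrFun h 1) 1
          simp [gmatZ, Matrix.mul_apply, Fin.sum_univ_two] at this
          have : a = b := by exact_mod_cast this
          rw [this]
        | cons d u =>
          exfalso
          obtain ⟨q1, q2, q3, q4, q5, q6⟩ := gmat_entries (d::u) hmt₂ (by simp)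
          obtain ⟨f1, _, _, _⟩ := mul_e b ((d::u).map gmatZ).prod
          have eL : (gmatZ a * (([]:List ℕ).map gmatZ).prod) 0 0 = 0 := by simp [gmatZ]
          have e := congrFun (congrFun h 0) 0
          rw [f1, eL] at e
          linarith
      | cons c s =>
        cases t₂ with
        | nil =>
          exfalso
          obtain ⟨q1, q2, q3, q4, q5, q6⟩ := gmat_entries (c::s) hmt₁ (by simp)
          obtain ⟨f1, _, _, _⟩ := mul_e a ((c::s).map gmatZ).prod
          have eL : (gmatZ b * (([]:List ℕ).map gmatZ).prod) 0 0 = 0 := by simp [gmatZ]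
          have e := congrFun (congrFun h 0) 0
          rw [f1, eL] at e
          linarith
        | cons d u =>
          obtain ⟨p1, p2, p3, p4, p5, p6⟩ := gmat_entries (c::s) hmt₁ (by simp)
          obtain ⟨q1, q2, q3, q4, q5, q6⟩ := gmat_entries (d::u) hmt₂ (by simp)
          obtain ⟨eP1, eP2, eP3, eP4⟩ := mul_e a ((c::s).map gmatZ).prod
          obtain ⟨eQ1, eQ2, eQ3, eQ4⟩ := mul_e b ((d::u).map gmatZ).prod
          have h00 := congrFun (congrFun h 0) 0
          have h01 := congrFun (congrFun h 0) 1
          have h10 := congrFun (congrFun h 1) 0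
          have h11 := congrFun (congrFun h 1) 1
          rw [eP1, eQ1] at h00
          rw [eP2, eQ2] at h01
          rw [eP3, eQ3] at h10
          rw [eP4, eQ4] at h11
          have hdetP : ((c::s).map gmatZ).prod 0 0 * ((c::s).map gmatZ).prod 1 1 -
              ((c::s).map gmatZ).prod 0 1 * ((c::s).map gmatZ).prod 1 0 ≠ 0 := by
            rw [← Matrix.det_fin_two, det_gmat_prod]
            exact pow_ne_zero _ (by norm_num)
          have hdetQ : ((d::u).map gmatZ).prod 0 0 * ((d::u).map gmatZ).prod 1 1 -
              ((d::u).map gmatZ).prod 0 1 * ((d::u).map gmatZ).prod 1 0 ≠ 0 := by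
            rw [← Matrix.det_fin_two, det_gmat_prod]
            exact pow_ne_zero _ (by norm_num)
          have h00' : ((c::s).map gmatZ).prod 1 0 = ((d::u).map gmatZ).prod 1 0 := h00
          have h01' : ((c::s).map gmatZ).prod 1 1 = ((d::u).map gmatZ).prod 1 1 := h01
          rw [← h00'] at h10 q5
          rw [← h01'] at h11 q6
          have habZ : (a:ℤ) = (b:ℤ) :=
            first_letter_eq (a:ℤ) (b:ℤ) _ _ _ _ _ _ h10 h11 p1 p2 p3 p4 p5 p6
              q1 q2 (h00' ▸ q3) (h01' ▸ q4) hdetP (by rw [h00', h01']; exact hdetQ)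
          have hab : a = b := by exact_mod_cast habZ
          subst hab
          have hPQ : ((c::s).map gmatZ).prod = ((d::u).map gmatZ).prod :=
            (gmat_unit a).mul_left_cancel h
          have := ih (d :: u) (by simp) (by simp) hmt₁ hmt₂ hPQ
          rw [this]

/-- The semigroup generated by the matrices `g_a = [[0,1],[1,a]]`, `a ∈ 𝒜`, is free:
two nonempty words in the generators that are equal as matrices are identical. -/
theorem cf_semigroup_free
    (𝒜 : Finset ℕ) (hpos : ∀ a ∈ 𝒜, 0 < a)
    (l₁ l₂ : List ℕ) (h₁ : l₁ ≠ []) (h₂ : l₂ ≠ [])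
    (hl₁ : ∀ a ∈ l₁, a ∈ 𝒜) (hl₂ : ∀ a ∈ l₂, a ∈ 𝒜)
    (h : (l₁.map gmatZ).prod = (l₂.map gmatZ).prod) :
    l₁ = l₂ := by
  exact free_aux l₁ l₂ h₁ h₂ (fun a ha => hpos a (hl₁ a ha)) (fun a ha => hpos a (hl₂ a ha)) h
end
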